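/- Cylinder volume bound: let E be a d-dimensional real inner product space, e₁ a unit vector, and S ⊆ B_r(0) (closed ball of radius r) a measurable set such that any two points of S differing only in the e₁ direction (i.e., s − s' parallel to e₁) satisfy ‖s − s'‖ ≤ w. Then Vol(S) ≤ w · Vol(𝔹^{d−1}_r), where 𝔹^{d−1}_r is the (d−1)-dimensional ball of radius r. -/

import Mathlib

open MeasureTheory

theorem stmt_8 (d : ℕ) (hd : 1 ≤ d) (r w : ℝ) (hr : 0 < r) (hw : 0 < w)
    (e₁ : EuclideanSpace ℝ (Fin d)) (he₁ : ‖e₁‖ = 1)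
    (S : Set (EuclideanSpace ℝ (Fin d))) (hS : MeasurableSet S)
    (hSb : S ⊆ Metric.closedBall 0 r)
    (hline : ∀ s ∈ S, ∀ s' ∈ S, (∃ c : ℝ, s - s' = c • e₁) → ‖s - s'‖ ≤ w) :
    (volume S).toReal ≤
      w * (Real.pi ^ (((d : ℝ) - 1) / 2) * r ^ (d - 1) /
        Real.Gamma (1 + ((d : ℝ) - 1) / 2)) := by
  obtain ⟨n, rfl⟩ : ∃ n, d = n + 1 := ⟨d - 1, (Nat.succ_pred_eq_of_pos hd).symm⟩
  have hcast : ((n + 1 : ℕ) : ℝ) - 1 = (n : ℝ) := by push_cast; ring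
  have hsub : (n + 1) - 1 = n := rfl
  rw [hcast, hsub]
  -- the target formula as a real number
  set C : ℝ := Real.pi ^ ((n : ℝ) / 2) * r ^ n / Real.Gamma (1 + (n : ℝ) / 2) with hC
  have hΓpos : 0 < Real.Gamma (1 + (n : ℝ) / 2) := Real.Gamma_pos_of_pos (by positivity)
  have hCnonneg : 0 ≤ C := by
    have : (0:ℝ) ≤ Real.pi ^ ((n : ℝ) / 2) := Real.rpow_nonneg Real.pi_pos.le _
    positivity
  -- extend e₁ to an orthonormal basis
  obtain ⟨b, hb⟩ : ∃ b : OrthonormalBasis (Fin (n+1)) ℝ (EuclideanSpace ℝ (Fin (n+1))),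
      ∀ i ∈ ({0} : Set (Fin (n+1))), b i = (fun _ => e₁) i := by
    refine Orthonormal.exists_orthonormalBasis_extension_of_card_eq ?_ ?_
    · simp [finrank_euclideanSpace]
    · constructor
      · intro i; simpa using he₁
      · intro i j hij
        exact absurd (Subsingleton.elim i j) hij
  have hb0 : b 0 = e₁ := hb 0 rfl
  -- the measure-preserving equivalence to ℝ × (Fin n → ℝ)
  let g : EuclideanSpace ℝ (Fin (n+1)) ≃ᵐ ℝ × (Fin n → ℝ) :=
    b.measurableEquiv.trans ((MeasurableEquiv.toLp 2 (Fin (n+1) → ℝ)).symm.trans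
      (MeasurableEquiv.piFinSuccAbove (fun _ => ℝ) 0))
  have hg : MeasurePreserving g volume volume :=
    (b.measurePreserving_measurableEquiv).trans
      ((EuclideanSpace.volume_preserving_symm_measurableEquiv_toLp _).trans
        (volume_preserving_piFinSuccAbove (fun _ => ℝ) 0))
  have happ : ∀ s, g s = (b.repr s 0, fun j => b.repr s ((0 : Fin (n+1)).succAbove j)) :=
    fun s => rfl
  set A : Set (ℝ × (Fin n → ℝ)) := ⇑g '' S with hA
  have hAeq : A = ⇑g.symm ⁻¹' S := by
    rw [hA, ← MeasurableEquiv.coe_toEquiv, Equiv.image_eq_preimage_symm]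
    rfl
  have hAmeas : MeasurableSet A := by
    rw [hAeq]; exact g.symm.measurable hS
  have hAvol : volume A = volume S := by
    rw [hAeq]
    exact (hg.symm g).measure_preimage hS.nullMeasurableSet
  -- membership characterization
  have hmem : ∀ x y, (x, y) ∈ A ↔ ∃ s ∈ S, b.repr s 0 = x ∧
      ∀ j, b.repr s ((0 : Fin (n+1)).succAbove j) = y j := by
    intro x y
    constructor
    · rintro ⟨s, hs, hgs⟩
      rw [happ s] at hgs
      refine ⟨s, hs, ?_, ?_⟩
      · exact congrArg Prod.fst hgs
      · intro j; exact congrFun (congrArg Prod.snd hgs) j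
    · rintro ⟨s, hs, h1, h2⟩
      exact ⟨s, hs, by rw [happ s]; exact Prod.ext h1 (funext h2)⟩
  -- base set: Euclidean closed ball preimage in Fin n → ℝ
  set B : Set (Fin n → ℝ) :=
    ⇑(MeasurableEquiv.toLp 2 (Fin n → ℝ)).symm.symm ⁻¹' Metric.closedBall 0 r with hB
  have hBmeas : MeasurableSet B :=
    (MeasurableEquiv.toLp 2 (Fin n → ℝ)).symm.symm.measurable measurableSet_closedBall
  have hBvol : volume B = volume (Metric.closedBall (0 : EuclideanSpace ℝ (Fin n)) r) :=
    ((EuclideanSpace.volume_preserving_symm_measurableEquiv_toLp (Fin n)).symm (MeasurableEquiv.toLp 2 (Fin n → ℝ)).symm).measure_preimage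
      measurableSet_closedBall.nullMeasurableSet
  -- slice bound
  have hslice : ∀ y : Fin n → ℝ,
      volume ((fun x => (x, y)) ⁻¹' A) ≤ B.indicator (fun _ => ENNReal.ofReal w) y := by
    intro y
    by_cases hy : y ∈ B
    · rw [Set.indicator_of_mem hy]
      refine (Real.volume_le_diam _).trans (EMetric.diam_le ?_)
      intro x₁ hx₁ x₂ hx₂
      obtain ⟨s₁, hs₁, hx₁0, hx₁j⟩ := (hmem x₁ y).mp hx₁
      obtain ⟨s₂, hs₂, hx₂0, hx₂j⟩ := (hmem x₂ y).mp hx₂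
      have hdiff : b.repr s₁ - b.repr s₂ =
          (x₁ - x₂) • EuclideanSpace.single (0 : Fin (n+1)) (1 : ℝ) := by
        ext i
        rcases eq_or_ne i 0 with rfl | hi
        · simp [EuclideanSpace.single_apply, hx₁0, hx₂0]
        · obtain ⟨j, rfl⟩ := Fin.exists_succAbove_eq hi
          have h1 := hx₁j j
          have h2 := hx₂j j
          simp only [Fin.zero_succAbove] at h1 h2 ⊢
          simp [EuclideanSpace.single_apply, h1, h2, Fin.succ_ne_zero]
      have hsdiff : s₁ - s₂ = (x₁ - x₂) • e₁ := by
        have := congrArg b.repr.symm hdiff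
        rwa [map_sub, b.repr.symm_apply_apply, b.repr.symm_apply_apply,
          LinearIsometryEquiv.map_smul, b.repr_symm_single, hb0] at this
      have hle : ‖s₁ - s₂‖ ≤ w := hline s₁ hs₁ s₂ hs₂ ⟨x₁ - x₂, hsdiff⟩
      have hnorm : ‖s₁ - s₂‖ = |x₁ - x₂| := by
        rw [hsdiff, norm_smul, he₁, Real.norm_eq_abs, mul_one]
      rw [edist_dist, Real.dist_eq]
      exact ENNReal.ofReal_le_ofReal (by rw [← hnorm]; exact hle)
    · rw [Set.indicator_of_notMem hy]
      refine le_of_eq ?_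
      rw [measure_eq_zero_iff_ae_notMem]
      refine Filter.Eventually.of_forall fun x hx => hy ?_
      obtain ⟨s, hs, hx0, hxj⟩ := (hmem x y).mp hx
      have hsr : ‖s‖ ≤ r := by
        have := hSb hs
        rwa [Metric.mem_closedBall, dist_zero_right] at this
      have hur : ‖b.repr s‖ ≤ r := by rwa [b.repr.norm_map]
      rw [hB, Set.mem_preimage, Metric.mem_closedBall, dist_zero_right]
      have hy_norm : ‖(MeasurableEquiv.toLp 2 (Fin n → ℝ)).symm.symm y‖ ≤ ‖b.repr s‖ := by
        rw [EuclideanSpace.norm_eq, EuclideanSpace.norm_eq]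
        apply Real.sqrt_le_sqrt
        have hsum := Fin.sum_univ_succAbove (fun i => ‖b.repr s i‖ ^ 2) (0 : Fin (n+1))
        rw [hsum]
        have heq : ∀ j, ‖((MeasurableEquiv.toLp 2 (Fin n → ℝ)).symm.symm y : EuclideanSpace ℝ (Fin n)) j‖ ^ 2
            = ‖b.repr s ((0 : Fin (n+1)).succAbove j)‖ ^ 2 := by
          intro j
          have : ((MeasurableEquiv.toLp 2 (Fin n → ℝ)).symm.symm y : EuclideanSpace ℝ (Fin n)) j = y j := rfl
          rw [this, hxj j]
        rw [Finset.sum_congr rfl fun j _ => heq j]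
        exact le_add_of_nonneg_left (by positivity)
      exact hy_norm.trans hur
  -- Fubini
  have hfub : volume A ≤ ENNReal.ofReal w * volume B := by
    rw [Measure.volume_eq_prod, Measure.prod_apply_symm hAmeas]
    calc ∫⁻ y, volume ((fun x => (x, y)) ⁻¹' A) ∂volume
        ≤ ∫⁻ y, B.indicator (fun _ => ENNReal.ofReal w) y ∂volume :=
          lintegral_mono fun y => hslice y
      _ = ENNReal.ofReal w * volume B := by
          rw [lintegral_indicator hBmeas, setLIntegral_const]
  -- volume of the (n)-dimensional ball
  have hball : volume (Metric.closedBall (0 : EuclideanSpace ℝ (Fin n)) r)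
      = ENNReal.ofReal C := by
    rcases Nat.eq_zero_or_pos n with rfl | hn
    · rw [volume_euclideanSpace_eq_dirac, Measure.dirac_apply' _ measurableSet_closedBall]
      have h0 : (0 : EuclideanSpace ℝ (Fin 0)) ∈ Metric.closedBall (0 : EuclideanSpace ℝ (Fin 0)) r :=
        Metric.mem_closedBall_self hr.le
      rw [Set.indicator_of_mem h0]
      simp [hC, Real.Gamma_one]
    · haveI : Nonempty (Fin n) := ⟨⟨0, hn⟩⟩
      rw [EuclideanSpace.volume_closedBall]
      rw [Fintype.card_fin]
      rw [← ENNReal.ofReal_pow hr.le, ← ENNReal.ofReal_mul (by positivity)]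
      congr 1
      rw [hC]
      have hsqrt : Real.sqrt Real.pi ^ n = Real.pi ^ ((n : ℝ) / 2) := by
        rw [Real.sqrt_eq_rpow, ← Real.rpow_natCast (Real.pi ^ ((1:ℝ)/2)) n,
          ← Real.rpow_mul Real.pi_pos.le]
        ring_nf
      rw [hsqrt, add_comm ((n:ℝ)/2) 1]
      ring
  -- conclude
  have hfinal : volume S ≤ ENNReal.ofReal (w * C) := by
    rw [← hAvol]
    refine hfub.trans ?_
    rw [hBvol, hball, ← ENNReal.ofReal_mul hw.le]
  exact ENNReal.toReal_le_of_le_ofReal (by positivity) hfinal
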